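/- Let α ∈ ℝ, let ψ ∈ L^{2,∞}(ℝ₊) satisfy ∫₀^∞ p ψ(p) dp = 0, and let Λ ↦ f_Λ be any real-valued function bounded on some interval [Λ₁, ∞). For Λ > 0 define A_Λ ψ(p) := 1_{(0,Λ]}(p) · [ p² ψ(p) + (α − 1/4) ∫₀^Λ min(p,q) ψ(q) dq + (f_Λ/Λ) · p · ∫₀^Λ q ψ(q) dq ]. Then A_Λ ψ converges in L²((0,∞)) as Λ → ∞ to the function (L̃_D ψ)(p) := p² ψ(p) + (α − 1/4) ∫₀^∞ min(p,q) ψ(q) dq. -/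

import Mathlib

open Filter MeasureTheory

/-- `ψ ∈ L^{2,∞}(ℝ₊)`: measurable with `∫₀^∞ pⁿ |ψ(p)|² dp < ∞` for all `n`. -/
def MemL2Inf (ψ : ℝ → ℂ) : Prop :=
  AEStronglyMeasurable ψ (volume.restrict (Set.Ioi 0)) ∧
  ∀ n : ℕ, IntegrableOn (fun p : ℝ => p ^ n * ‖ψ p‖^2) (Set.Ioi 0)

/-- The cutoff Dirichlet Bessel operator with coupling `α` plus rank-one counterterm,
`A_Λ ψ(p) = 1_{(0,Λ]}(p) [ p²ψ(p) + (α-1/4)∫₀^Λ min(p,q)ψ(q)dq + (f_Λ/Λ) p ∫₀^Λ qψ(q)dq ]`. -/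
noncomputable def cutoffBesselD (α : ℝ) (f : ℝ → ℝ) (ψ : ℝ → ℂ) (Λ : ℝ) : ℝ → ℂ :=
  fun p => Set.indicator (Set.Ioc (0:ℝ) Λ) (fun p =>
    (p : ℂ)^2 * ψ p
      + ((α : ℂ) - 1/4) * (∫ q in Set.Ioc (0:ℝ) Λ, ((min p q : ℝ) : ℂ) * ψ q)
      + ((f Λ / Λ : ℝ) : ℂ) * (p : ℂ) * (∫ q in Set.Ioc (0:ℝ) Λ, (q : ℂ) * ψ q)) p

/-- The momentum-space Dirichlet Bessel operator
`(L̃_D ψ)(p) = p² ψ(p) + (α - 1/4) ∫₀^∞ min(p,q) ψ(q) dq`. -/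
noncomputable def momentumBesselD (α : ℝ) (ψ : ℝ → ℂ) : ℝ → ℂ :=
  fun p => (p : ℂ)^2 * ψ p
    + ((α : ℂ) - 1/4) * ∫ q in Set.Ioi (0:ℝ), ((min p q : ℝ) : ℂ) * ψ q

section Aux
open Set Topology

lemma split_integral {E : Type*} [NormedAddCommGroup E] [NormedSpace ℝ E] (f : ℝ → E) {Λ : ℝ}
    (hΛ : 0 ≤ Λ) (hi : IntegrableOn f (Ioi 0)) :
    ∫ q in Ioi 0, f q = (∫ q in Ioc 0 Λ, f q) + ∫ q in Ioi Λ, f q := by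
  have hsub : Ioc (0:ℝ) Λ ∪ Ioi Λ = Ioi 0 := Ioc_union_Ioi_eq_Ioi hΛ
  rw [← hsub]
  exact setIntegral_union (Ioc_disjoint_Ioi le_rfl) measurableSet_Ioi
    (hi.mono_set (by rw [← hsub]; exact subset_union_left))
    (hi.mono_set (by rw [← hsub]; exact subset_union_right))

lemma tail_tendsto {h : ℝ → ℝ} (hi : IntegrableOn h (Set.Ioi 0)) :
    Tendsto (fun Λ : ℝ => ∫ p in Set.Ioi Λ, h p) atTop (𝓝 0) := by
  have h1 := intervalIntegral_tendsto_integral_Ioi 0 hi tendsto_id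
  have heq : (fun Λ : ℝ => ∫ p in Set.Ioi Λ, h p) =ᶠ[atTop]
      (fun Λ => (∫ p in Set.Ioi 0, h p) - ∫ p in (0:ℝ)..Λ, h p) := by
    filter_upwards [eventually_ge_atTop (0:ℝ)] with Λ hΛ
    rw [intervalIntegral.integral_of_le hΛ, split_integral h hΛ hi]
    ring
  have h2 : Tendsto (fun Λ => (∫ p in Set.Ioi 0, h p) - ∫ p in (0:ℝ)..Λ, h p) atTop
      (𝓝 ((∫ p in Set.Ioi 0, h p) - ∫ p in Set.Ioi 0, h p)) := tendsto_const_nhds.sub h1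
  rw [sub_self] at h2
  exact h2.congr' heq.symm

lemma eLpNorm_two_le_sqrt {μ : Measure ℝ} {f : ℝ → ℂ} {g : ℝ → ℝ}
    (hg : AEStronglyMeasurable g μ) (hgsq : Integrable (fun x => g x ^ 2) μ)
    (hbound : ∀ᵐ x ∂μ, ‖f x‖ ≤ g x) :
    eLpNorm f 2 μ ≤ ENNReal.ofReal ((∫ x, g x ^ 2 ∂μ) ^ ((2:ℝ)⁻¹)) := by
  have hgm : MemLp g 2 μ := (memLp_two_iff_integrable_sq hg).2 hgsq
  have h1 : eLpNorm f 2 μ ≤ eLpNorm g 2 μ :=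
    eLpNorm_mono_ae (hbound.mono fun x hx => hx.trans (le_abs_self _))
  rw [hgm.eLpNorm_eq_integral_rpow_norm two_ne_zero ENNReal.ofNat_ne_top] at h1
  refine h1.trans_eq ?_
  rw [ENNReal.toReal_ofNat]
  congr 2
  apply integral_congr_ae
  filter_upwards with x
  rw [Real.norm_eq_abs, Real.rpow_two, sq_abs]

lemma MemL2Inf.abs_integrable {ψ : ℝ → ℂ} (hψ : MemL2Inf ψ) (n : ℕ) :
    IntegrableOn (fun p : ℝ => p ^ n * ‖ψ p‖) (Set.Ioi 0) := by
  have hmeas : AEStronglyMeasurable (fun p : ℝ => p ^ n * ‖ψ p‖)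
      (volume.restrict (Set.Ioi 0)) :=
    (continuous_pow n).aestronglyMeasurable.mul hψ.1.norm
  have h1 : IntegrableOn (fun p : ℝ => p ^ n * ‖ψ p‖) (Set.Ioc 0 1) := by
    refine Integrable.mono' (g := fun p => (1 + p ^ (2*n) * ‖ψ p‖^2)/2) ?_ ?_ ?_
    · refine (Integrable.add (integrable_const 1) ?_).div_const 2
      exact ((hψ.2 (2*n)).mono_set Ioc_subset_Ioi_self)
    · exact hmeas.mono_measure (Measure.restrict_mono Ioc_subset_Ioi_self le_rfl)
    · rw [ae_restrict_iff' measurableSet_Ioc]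
      refine ae_of_all _ fun p hp => ?_
      have hp0 : 0 < p := hp.1
      have hpn : p ^ n ≤ 1 := pow_le_one₀ hp0.le hp.2
      have h2 : p ^ (2*n) * ‖ψ p‖^2 = (p^n * ‖ψ p‖)^2 := by
        rw [two_mul, pow_add]; ring
      show ‖p ^ n * ‖ψ p‖‖ ≤ (1 + p ^ (2*n) * ‖ψ p‖^2)/2
      rw [Real.norm_eq_abs, abs_of_nonneg (by positivity)]
      nlinarith [norm_nonneg (ψ p), pow_nonneg hp0.le n,
        sq_nonneg (1 - p^n * ‖ψ p‖), mul_nonneg (pow_nonneg hp0.le n) (norm_nonneg (ψ p))]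
  have h2 : IntegrableOn (fun p : ℝ => p ^ n * ‖ψ p‖) (Set.Ioi 1) := by
    refine Integrable.mono'
      (g := fun p => (p ^ (-2 : ℝ) + p ^ (2*n+2) * ‖ψ p‖^2)/2) ?_ ?_ ?_
    · refine ((integrableOn_Ioi_rpow_of_lt (by norm_num) one_pos).add ?_).div_const 2
      exact ((hψ.2 (2*n+2)).mono_set (Ioi_subset_Ioi zero_le_one))
    · exact hmeas.mono_measure (Measure.restrict_mono (Ioi_subset_Ioi zero_le_one) le_rfl)
    · rw [ae_restrict_iff' measurableSet_Ioi]
      refine ae_of_all _ fun p hp => ?_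
      have hp1 : (1:ℝ) < p := hp
      have hp0 : (0:ℝ) < p := lt_trans one_pos hp1
      have hrw : p ^ (-2:ℝ) = (p⁻¹)^2 := by
        rw [show (-2:ℝ) = -(2:ℕ) by norm_num, Real.rpow_neg hp0.le, Real.rpow_natCast, inv_pow]
      have hab : p ^ n * ‖ψ p‖ = p⁻¹ * (p^(n+1) * ‖ψ p‖) := by
        field_simp [pow_succ]; ring
      have hb2 : (p^(n+1) * ‖ψ p‖)^2 = p ^ (2*n+2) * ‖ψ p‖^2 := by
        rw [mul_pow, ← pow_mul]; ring_nf
      show ‖p ^ n * ‖ψ p‖‖ ≤ (p ^ (-2:ℝ) + p ^ (2*n+2) * ‖ψ p‖^2)/2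
      rw [Real.norm_eq_abs, abs_of_nonneg (by positivity), hrw, hab]
      nlinarith [sq_nonneg (p⁻¹ - p^(n+1) * ‖ψ p‖)]
  have : IntegrableOn (fun p : ℝ => p ^ n * ‖ψ p‖) (Set.Ioc 0 1 ∪ Set.Ioi 1) := h1.union h2
  rwa [Ioc_union_Ioi_eq_Ioi zero_le_one] at this

lemma MemL2Inf.pow_mul_integrable {ψ : ℝ → ℂ} (hψ : MemL2Inf ψ) (n : ℕ) :
    IntegrableOn (fun q : ℝ => (q:ℂ) ^ n * ψ q) (Set.Ioi 0) := by
  refine Integrable.mono' (hψ.abs_integrable n)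
    (((Complex.continuous_ofReal.pow n).aestronglyMeasurable).mul hψ.1) ?_
  rw [ae_restrict_iff' measurableSet_Ioi]
  refine ae_of_all _ fun q hq => ?_
  rw [norm_mul, norm_pow, Complex.norm_real, Real.norm_eq_abs, abs_of_pos hq]

lemma MemL2Inf.min_integrable {ψ : ℝ → ℂ} (hψ : MemL2Inf ψ) (p : ℝ) :
    IntegrableOn (fun q : ℝ => ((min p q : ℝ):ℂ) * ψ q) (Set.Ioi 0) := by
  refine Integrable.mono'
    (g := fun q => |p| * ‖ψ q‖ + q * ‖ψ q‖) ?_ ?_ ?_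
  · have h0 := hψ.abs_integrable 0
    simp only [pow_zero, one_mul] at h0
    have h1 := hψ.abs_integrable 1
    simp only [pow_one] at h1
    exact (h0.const_mul _).add h1
  · exact ((Complex.continuous_ofReal.comp (continuous_const.min continuous_id)).aestronglyMeasurable).mul hψ.1
  · rw [ae_restrict_iff' measurableSet_Ioi]
    refine ae_of_all _ fun q hq => ?_
    rw [norm_mul, Complex.norm_real, Real.norm_eq_abs]
    have : |min p q| ≤ |p| + q := by
      rcases min_cases p q with ⟨h, _⟩ | ⟨h, _⟩ <;> rw [h]
      · exact le_add_of_nonneg_right hq.le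
      · rw [abs_of_pos hq]; exact le_add_of_nonneg_left (abs_nonneg p)
    calc |min p q| * ‖ψ q‖ ≤ (|p| + q) * ‖ψ q‖ :=
          mul_le_mul_of_nonneg_right this (norm_nonneg _)
      _ = |p| * ‖ψ q‖ + q * ‖ψ q‖ := by ring

lemma MemL2Inf.cont_G {ψ : ℝ → ℂ} (hψ : MemL2Inf ψ) :
    Continuous (fun p => ∫ q in Set.Ioi (0:ℝ), ((min p q : ℝ):ℂ) * ψ q) := by
  have h0 := hψ.abs_integrable 0
  simp only [pow_zero, one_mul] at h0
  set K : ℝ := ∫ q in Set.Ioi (0:ℝ), ‖ψ q‖ with hK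
  have hKnn : 0 ≤ K := setIntegral_nonneg measurableSet_Ioi fun q _ => norm_nonneg _
  refine (LipschitzWith.of_dist_le_mul (K := K.toNNReal) fun p p' => ?_).continuous
  rw [dist_eq_norm, dist_eq_norm]
  have hsub : (∫ q in Set.Ioi (0:ℝ), ((min p q : ℝ):ℂ) * ψ q) -
      (∫ q in Set.Ioi (0:ℝ), ((min p' q : ℝ):ℂ) * ψ q) =
      ∫ q in Set.Ioi (0:ℝ), (((min p q : ℝ):ℂ) - ((min p' q : ℝ):ℂ)) * ψ q := by
    rw [← integral_sub (hψ.min_integrable p) (hψ.min_integrable p')]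
    congr 1; ext q; ring
  rw [hsub]
  have hb : ∀ q ∈ Set.Ioi (0:ℝ), ‖(((min p q : ℝ):ℂ) - ((min p' q : ℝ):ℂ)) * ψ q‖ ≤
      ‖p - p'‖ * ‖ψ q‖ := by
    intro q _
    rw [norm_mul]
    refine mul_le_mul_of_nonneg_right ?_ (norm_nonneg _)
    rw [← Complex.ofReal_sub, Complex.norm_real, Real.norm_eq_abs, Real.norm_eq_abs]
    exact (abs_min_sub_min_le_max p q p' q).trans (by simp [abs_sub_comm])
  calc ‖∫ q in Set.Ioi (0:ℝ), (((min p q : ℝ):ℂ) - ((min p' q : ℝ):ℂ)) * ψ q‖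
      ≤ ∫ q in Set.Ioi (0:ℝ), ‖p - p'‖ * ‖ψ q‖ := by
        refine norm_integral_le_of_norm_le (h0.const_mul _) ?_
        rw [ae_restrict_iff' measurableSet_Ioi]
        exact ae_of_all _ hb
    _ = K.toNNReal * dist p p' := by
        rw [integral_const_mul, ← hK, Real.coe_toNNReal _ hKnn, dist_eq_norm]; ring

/-- tail decay: `∫_{Ioi Λ} q^m ‖ψ‖ ≤ Λ⁻ᵏ ∫_{Ioi 0} q^{m+k} ‖ψ‖`. -/
lemma MemL2Inf.tail_decay {ψ : ℝ → ℂ} (hψ : MemL2Inf ψ) {Λ : ℝ} (hΛ : 0 < Λ) (m k : ℕ) :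
    (∫ q in Set.Ioi Λ, q ^ m * ‖ψ q‖) ≤ (Λ⁻¹)^k * ∫ q in Set.Ioi (0:ℝ), q ^ (m+k) * ‖ψ q‖ := by
  have hint : IntegrableOn (fun q : ℝ => q ^ (m+k) * ‖ψ q‖) (Set.Ioi Λ) :=
    (hψ.abs_integrable (m+k)).mono_set (Ioi_subset_Ioi hΛ.le)
  calc (∫ q in Set.Ioi Λ, q ^ m * ‖ψ q‖)
      ≤ ∫ q in Set.Ioi Λ, (Λ⁻¹)^k * (q ^ (m+k) * ‖ψ q‖) := by
        refine setIntegral_mono_on ((hψ.abs_integrable m).mono_set (Ioi_subset_Ioi hΛ.le))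
          (hint.const_mul _) measurableSet_Ioi fun q hq => ?_
        have hq0 : 0 < q := hΛ.trans hq
        have h1 : Λ ^ k ≤ q ^ k := pow_le_pow_left₀ hΛ.le (le_of_lt hq) k
        have h2 : q ^ m * Λ ^ k ≤ q ^ (m+k) := by
          rw [pow_add]
          exact mul_le_mul_of_nonneg_left h1 (pow_nonneg hq0.le m)
        have key : q ^ m * ‖ψ q‖ * Λ ^ k ≤ q ^ (m+k) * ‖ψ q‖ := by
          calc q ^ m * ‖ψ q‖ * Λ ^ k = (q ^ m * Λ ^ k) * ‖ψ q‖ := by ring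
            _ ≤ _ := mul_le_mul_of_nonneg_right h2 (norm_nonneg _)
        have hpk : (0:ℝ) < Λ ^ k := pow_pos hΛ k
        have hrw : (Λ⁻¹)^k * (q ^ (m+k) * ‖ψ q‖) = (q ^ (m+k) * ‖ψ q‖) / Λ ^ k := by
          rw [inv_pow, div_eq_mul_inv]; ring
        show q ^ m * ‖ψ q‖ ≤ (Λ⁻¹)^k * (q ^ (m+k) * ‖ψ q‖)
        rw [hrw, le_div_iff₀ hpk]
        exact key
    _ = (Λ⁻¹)^k * ∫ q in Set.Ioi Λ, q ^ (m+k) * ‖ψ q‖ := integral_const_mul _ _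
    _ ≤ (Λ⁻¹)^k * ∫ q in Set.Ioi (0:ℝ), q ^ (m+k) * ‖ψ q‖ := by
        refine mul_le_mul_of_nonneg_left ?_ (by positivity)
        refine setIntegral_mono_set (hψ.abs_integrable (m+k)) ?_
          ((Ioi_subset_Ioi hΛ.le).eventuallyLE)
        exact (ae_restrict_iff' measurableSet_Ioi).2 (ae_of_all _ fun q hq => mul_nonneg (pow_nonneg (le_of_lt hq) _) (norm_nonneg _))

lemma MemL2Inf.G_bound {ψ : ℝ → ℂ} (hψ : MemL2Inf ψ)
    (hmom : ∫ p in Set.Ioi (0:ℝ), (p : ℂ) * ψ p = 0) {p : ℝ} (hp : 0 < p) :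
    ‖∫ q in Set.Ioi (0:ℝ), ((min p q : ℝ):ℂ) * ψ q‖ ≤
      2 * (∫ q in Set.Ioi (0:ℝ), q ^ 3 * ‖ψ q‖) * (p⁻¹)^2 := by
  have hq1 : IntegrableOn (fun q : ℝ => (q:ℂ) * ψ q) (Set.Ioi 0) := by
    have := hψ.pow_mul_integrable 1; simpa using this
  have h0 := hψ.abs_integrable 0
  simp only [pow_zero, one_mul] at h0
  have h1 := hψ.abs_integrable 1
  simp only [pow_one] at h1
  -- identity
  have hsplit := split_integral _ hp.le (hψ.min_integrable p)
  have hIoc : (∫ q in Set.Ioc (0:ℝ) p, ((min p q : ℝ):ℂ) * ψ q) =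
      ∫ q in Set.Ioc (0:ℝ) p, (q:ℂ) * ψ q := by
    refine setIntegral_congr_fun measurableSet_Ioc fun q hq => ?_
    rw [min_eq_right hq.2]
  have hIoi : (∫ q in Set.Ioi p, ((min p q : ℝ):ℂ) * ψ q) =
      (p:ℂ) * ∫ q in Set.Ioi p, ψ q := by
    rw [← integral_const_mul]
    refine setIntegral_congr_fun measurableSet_Ioi fun q hq => ?_
    rw [min_eq_left (le_of_lt hq)]
  have hmomsplit := split_integral _ hp.le hq1
  rw [hmom] at hmomsplit
  have hIoc2 : (∫ q in Set.Ioc (0:ℝ) p, (q:ℂ) * ψ q) = - ∫ q in Set.Ioi p, (q:ℂ) * ψ q := by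
    linear_combination -hmomsplit
  have hid : (∫ q in Set.Ioi (0:ℝ), ((min p q : ℝ):ℂ) * ψ q) =
      (p:ℂ) * (∫ q in Set.Ioi p, ψ q) - ∫ q in Set.Ioi p, (q:ℂ) * ψ q := by
    rw [hsplit, hIoc, hIoi, hIoc2]; ring
  rw [hid]
  -- bounds
  have hb1 : ‖(p:ℂ) * ∫ q in Set.Ioi p, ψ q‖ ≤ ∫ q in Set.Ioi p, q * ‖ψ q‖ := by
    rw [norm_mul, Complex.norm_real, Real.norm_eq_abs, abs_of_pos hp]
    calc p * ‖∫ q in Set.Ioi p, ψ q‖ ≤ p * ∫ q in Set.Ioi p, ‖ψ q‖ :=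
          mul_le_mul_of_nonneg_left (norm_integral_le_integral_norm _) hp.le
      _ = ∫ q in Set.Ioi p, p * ‖ψ q‖ := (integral_const_mul _ _).symm
      _ ≤ ∫ q in Set.Ioi p, q * ‖ψ q‖ := by
          refine setIntegral_mono_on ((h0.mono_set (Ioi_subset_Ioi hp.le)).const_mul _)
            (h1.mono_set (Ioi_subset_Ioi hp.le)) measurableSet_Ioi fun q hq => ?_
          exact mul_le_mul_of_nonneg_right (le_of_lt hq) (norm_nonneg _)
  have hb2 : ‖∫ q in Set.Ioi p, (q:ℂ) * ψ q‖ ≤ ∫ q in Set.Ioi p, q * ‖ψ q‖ := by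
    refine (norm_integral_le_integral_norm _).trans_eq ?_
    refine setIntegral_congr_fun measurableSet_Ioi fun q hq => ?_
    rw [norm_mul, Complex.norm_real, Real.norm_eq_abs, abs_of_pos (hp.trans hq)]
  have hb3 : (∫ q in Set.Ioi p, q * ‖ψ q‖) ≤ (∫ q in Set.Ioi (0:ℝ), q ^ 3 * ‖ψ q‖) * (p⁻¹)^2 := by
    have hd := hψ.tail_decay hp 1 2
    simp only [pow_one] at hd
    calc (∫ q in Set.Ioi p, q * ‖ψ q‖) ≤ (p⁻¹)^2 * ∫ q in Set.Ioi (0:ℝ), q^(1+2) * ‖ψ q‖ := hd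
      _ = (∫ q in Set.Ioi (0:ℝ), q ^ 3 * ‖ψ q‖) * (p⁻¹)^2 := by norm_num; ring
  calc ‖(p:ℂ) * (∫ q in Set.Ioi p, ψ q) - ∫ q in Set.Ioi p, (q:ℂ) * ψ q‖
      ≤ ‖(p:ℂ) * ∫ q in Set.Ioi p, ψ q‖ + ‖∫ q in Set.Ioi p, (q:ℂ) * ψ q‖ := norm_sub_le _ _
    _ ≤ (∫ q in Set.Ioi p, q * ‖ψ q‖) + ∫ q in Set.Ioi p, q * ‖ψ q‖ := add_le_add hb1 hb2
    _ ≤ 2 * (∫ q in Set.Ioi (0:ℝ), q ^ 3 * ‖ψ q‖) * (p⁻¹)^2 := by linarith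

end Aux

open Set Topology in
lemma indicator_integrable_restrict {s : Set ℝ} (hs : MeasurableSet s) (hsub : s ⊆ Set.Ioi 0)
    {h : ℝ → ℝ} (hi : IntegrableOn h s volume) :
    Integrable (Set.indicator s h) (volume.restrict (Set.Ioi 0)) := by
  rw [integrable_indicator_iff hs, IntegrableOn, Measure.restrict_restrict hs,
    Set.inter_eq_self_of_subset_left hsub]
  exact hi

open Set Topology in
lemma indicator_integral_restrict {s : Set ℝ} (hs : MeasurableSet s) (hsub : s ⊆ Set.Ioi 0)
    (h : ℝ → ℝ) :
    ∫ x, Set.indicator s h x ∂(volume.restrict (Set.Ioi 0)) = ∫ x in s, h x := by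
  rw [integral_indicator hs, Measure.restrict_restrict hs, Set.inter_eq_self_of_subset_left hsub]

open Topology in
lemma rpow_half_tendsto {I : ℝ → ℝ} (h : Tendsto I atTop (𝓝 0)) :
    Tendsto (fun Λ => ENNReal.ofReal (I Λ ^ ((2:ℝ)⁻¹))) atTop (𝓝 0) := by
  have h1 : Tendsto (fun Λ => (I Λ) ^ ((2:ℝ)⁻¹)) atTop (𝓝 ((0:ℝ) ^ ((2:ℝ)⁻¹))) :=
    ((Real.continuousAt_rpow_const 0 _ (Or.inr (by norm_num))).tendsto.comp h)
  rw [Real.zero_rpow (by norm_num)] at h1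
  have h2 := (ENNReal.continuous_ofReal.tendsto 0).comp h1
  rw [ENNReal.ofReal_zero] at h2
  exact h2

lemma sq_indicator_eq {s : Set ℝ} (h : ℝ → ℝ) :
    (fun x => (Set.indicator s h x)^2) = Set.indicator s (fun x => h x ^ 2) := by
  ext x
  by_cases hx : x ∈ s
  · rw [Set.indicator_of_mem hx, Set.indicator_of_mem hx]
  · rw [Set.indicator_of_notMem hx, Set.indicator_of_notMem hx]
    norm_num

set_option maxHeartbeats 1000000 in
/-- On minimal-domain vectors, the cutoff Dirichlet Bessel operators with any eventually
bounded running coupling converge in `L²((0,∞))` to the momentum-space Bessel operator. -/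
theorem cutoff_besselD_converges_on_minimal (α : ℝ) (ψ : ℝ → ℂ) (hψ : MemL2Inf ψ)
    (hmom : ∫ p in Set.Ioi (0:ℝ), (p : ℂ) * ψ p = 0)
    (f : ℝ → ℝ) (hf : ∃ Λ₁ C : ℝ, ∀ Λ ≥ Λ₁, |f Λ| ≤ C) :
    Tendsto (fun Λ : ℝ =>
        eLpNorm (fun p => cutoffBesselD α f ψ Λ p - momentumBesselD α ψ p) 2
          (volume.restrict (Set.Ioi 0)))
      atTop (nhds 0) := by
  classical
  obtain ⟨Λ₁, C0, hC0⟩ := hf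
  set μ := volume.restrict (Set.Ioi (0:ℝ)) with hμ
  set C : ℝ := max C0 0 with hCdef
  have hCnn : 0 ≤ C := le_max_right _ _
  have hC : ∀ Λ ≥ Λ₁, |f Λ| ≤ C := fun Λ hΛ => (hC0 Λ hΛ).trans (le_max_left _ _)
  set G : ℝ → ℂ := fun p => ∫ q in Set.Ioi (0:ℝ), ((min p q : ℝ):ℂ) * ψ q with hG
  set K2 : ℝ := ∫ q in Set.Ioi (0:ℝ), q^2 * ‖ψ q‖ with hK2
  set K3 : ℝ := ∫ q in Set.Ioi (0:ℝ), q^3 * ‖ψ q‖ with hK3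
  have hK2nn : 0 ≤ K2 :=
    setIntegral_nonneg measurableSet_Ioi fun q hq =>
      mul_nonneg (pow_nonneg (le_of_lt hq) _) (norm_nonneg _)
  have hK3nn : 0 ≤ K3 :=
    setIntegral_nonneg measurableSet_Ioi fun q hq =>
      mul_nonneg (pow_nonneg (le_of_lt hq) _) (norm_nonneg _)
  set cα : ℝ := |α - 1/4| with hcα
  have hcαnn : 0 ≤ cα := abs_nonneg _
  have hnormα : ‖(α:ℂ) - 1/4‖ = cα := by
    rw [show (α:ℂ) - 1/4 = ((α - 1/4 : ℝ) : ℂ) by push_cast; ring, Complex.norm_real,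
      Real.norm_eq_abs]
  set c3 : ℝ := cα * (2 * K3) with hc3
  have hc3nn : 0 ≤ c3 := by positivity
  set D : ℝ := cα + C with hD
  set S : ℕ → ℝ → ℝ := fun m Λ => ∫ q in Set.Ioi Λ, q^m * ‖ψ q‖ with hS
  have hSnn : ∀ (m : ℕ) (Λ : ℝ), 0 < Λ → 0 ≤ S m Λ := fun m Λ hΛ =>
    setIntegral_nonneg measurableSet_Ioi fun q hq =>
      mul_nonneg (pow_nonneg (le_of_lt (hΛ.trans hq)) _) (norm_nonneg _)
  set aa : ℝ → ℝ := fun Λ => cα * S 0 Λ + (C/Λ) * S 1 Λ with haa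
  set I1 : ℝ → ℝ := fun Λ => (aa Λ)^2 * Λ^3 with hI1
  set I2 : ℝ → ℝ := fun Λ => ∫ p in Set.Ioi Λ, p^4 * ‖ψ p‖^2 with hI2
  set I3 : ℝ → ℝ := fun Λ => c3^2 * (Λ^(-3:ℝ)/3) with hI3
  -- limits of the three bound functions
  have hI1lim : Tendsto I1 atTop (nhds 0) := by
    have hlim : Tendsto (fun Λ : ℝ => D^2*K2^2 * Λ⁻¹) atTop (nhds 0) := by
      have h := tendsto_inv_atTop_zero (𝕜 := ℝ) |>.const_mul (D^2*K2^2)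
      simpa using h
    refine squeeze_zero' ?_ ?_ hlim
    · filter_upwards [eventually_ge_atTop (0:ℝ)] with Λ hΛ0
      exact mul_nonneg (sq_nonneg _) (pow_nonneg hΛ0 3)
    · filter_upwards [eventually_ge_atTop (1:ℝ)] with Λ hΛ1
      have hΛpos : (0:ℝ) < Λ := lt_of_lt_of_le one_pos hΛ1
      have hS0 : S 0 Λ ≤ (Λ⁻¹)^2 * K2 := by
        have h := hψ.tail_decay hΛpos 0 2
        rw [hS, hK2]
        simpa using h
      have hS1 : S 1 Λ ≤ Λ⁻¹ * K2 := by
        have h := hψ.tail_decay hΛpos 1 1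
        rw [hS, hK2]
        simpa using h
      have haabound : aa Λ ≤ D * K2 * (Λ⁻¹)^2 := by
        have h2 : (C/Λ) * S 1 Λ ≤ (C/Λ) * (Λ⁻¹ * K2) :=
          mul_le_mul_of_nonneg_left hS1 (by positivity)
        have h3 : (C/Λ) * (Λ⁻¹ * K2) = C * K2 * (Λ⁻¹)^2 := by
          rw [div_eq_mul_inv]; ring
        have h1 : cα * S 0 Λ ≤ cα * ((Λ⁻¹)^2 * K2) := mul_le_mul_of_nonneg_left hS0 hcαnn
        rw [haa, hD]
        calc cα * S 0 Λ + (C/Λ) * S 1 Λ ≤ cα * ((Λ⁻¹)^2 * K2) + C * K2 * (Λ⁻¹)^2 := by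
              rw [← h3]; exact add_le_add h1 h2
          _ = (cα + C) * K2 * (Λ⁻¹)^2 := by ring
      have haann : 0 ≤ aa Λ :=
        add_nonneg (mul_nonneg hcαnn (hSnn 0 Λ hΛpos)) (mul_nonneg (by positivity) (hSnn 1 Λ hΛpos))
      calc I1 Λ = (aa Λ)^2 * Λ^3 := rfl
        _ ≤ (D * K2 * (Λ⁻¹)^2)^2 * Λ^3 :=
            mul_le_mul_of_nonneg_right (pow_le_pow_left₀ haann haabound 2) (by positivity)
        _ = D^2*K2^2 * Λ⁻¹ := by field_simp
  have hI2lim : Tendsto I2 atTop (nhds 0) := tail_tendsto (hψ.2 4)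
  have hI3lim : Tendsto I3 atTop (nhds 0) := by
    have h1 := (tendsto_rpow_neg_atTop (show (0:ℝ) < 3 by norm_num)).div_const 3
    have h2 := h1.const_mul (c3^2)
    simpa [hI3] using h2
  have hBlim : Tendsto (fun Λ => ENNReal.ofReal (I1 Λ ^ ((2:ℝ)⁻¹)) +
      (ENNReal.ofReal (I2 Λ ^ ((2:ℝ)⁻¹)) + ENNReal.ofReal (I3 Λ ^ ((2:ℝ)⁻¹))))
      atTop (nhds 0) := by
    have := (rpow_half_tendsto hI1lim).add ((rpow_half_tendsto hI2lim).add
      (rpow_half_tendsto hI3lim))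
    simpa using this
  refine tendsto_of_tendsto_of_tendsto_of_le_of_le' tendsto_const_nhds hBlim
    (Filter.Eventually.of_forall fun Λ => zero_le) ?_
  filter_upwards [eventually_ge_atTop (max Λ₁ 1)] with Λ hΛ
  have hΛ1 : (1:ℝ) ≤ Λ := le_trans (le_max_right _ _) hΛ
  have hΛpos : (0:ℝ) < Λ := lt_of_lt_of_le one_pos hΛ1
  have hfC : |f Λ| ≤ C := hC Λ (le_trans (le_max_left _ _) hΛ)
  have hq1 : IntegrableOn (fun q : ℝ => (q:ℂ) * ψ q) (Set.Ioi 0) := by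
    have := hψ.pow_mul_integrable 1; simpa using this
  set A : ℂ := -(((α:ℂ) - 1/4) * ∫ q in Set.Ioi Λ, ψ q)
      - ((f Λ / Λ : ℝ):ℂ) * ∫ q in Set.Ioi Λ, (q:ℂ) * ψ q with hA
  set F₁ : ℝ → ℂ := Set.indicator (Set.Ioc 0 Λ) (fun p => A * (p:ℂ)) with hF₁
  set F₂ : ℝ → ℂ := Set.indicator (Set.Ioi Λ) (fun p => -((p:ℂ)^2 * ψ p)) with hF₂
  set F₃ : ℝ → ℂ := Set.indicator (Set.Ioi Λ) (fun p => -(((α:ℂ) - 1/4) * G p)) with hF₃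
  -- pointwise decomposition on (0,∞)
  have hdecomp : ∀ p ∈ Set.Ioi (0:ℝ), cutoffBesselD α f ψ Λ p - momentumBesselD α ψ p
      = F₁ p + (F₂ p + F₃ p) := by
    intro p hp
    rcases le_or_gt p Λ with hpΛ | hpΛ
    · have hpmem : p ∈ Set.Ioc (0:ℝ) Λ := ⟨hp, hpΛ⟩
      have hnot : p ∉ Set.Ioi Λ := by simp only [Set.mem_Ioi, not_lt]; exact hpΛ
      rw [hF₁, hF₂, hF₃, Set.indicator_of_mem hpmem, Set.indicator_of_notMem hnot,
        Set.indicator_of_notMem hnot]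
      simp only [cutoffBesselD, momentumBesselD]
      rw [Set.indicator_of_mem hpmem]
      have hminsplit := split_integral (fun q => ((min p q : ℝ):ℂ) * ψ q) hΛpos.le
        (hψ.min_integrable p)
      have hmintail : (∫ q in Set.Ioi Λ, ((min p q : ℝ):ℂ) * ψ q)
          = (p:ℂ) * ∫ q in Set.Ioi Λ, ψ q := by
        rw [← integral_const_mul]
        refine setIntegral_congr_fun measurableSet_Ioi fun q hq => ?_
        rw [min_eq_left (hpΛ.trans (le_of_lt hq))]
      have hqsplit := split_integral (fun q => (q:ℂ) * ψ q) hΛpos.le hq1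
      rw [hmom] at hqsplit
      rw [hminsplit, hmintail, hA]
      have hGrw : G p = (∫ q in Set.Ioc (0:ℝ) Λ, ((min p q : ℝ):ℂ) * ψ q)
          + (p:ℂ) * ∫ q in Set.Ioi Λ, ψ q := by
        rw [hG]
        simp only []
        rw [hminsplit, hmintail]
      linear_combination (-(((f Λ / Λ : ℝ):ℂ) * (p:ℂ))) * hqsplit
    · have hpmem : p ∈ Set.Ioi Λ := hpΛ
      have hnot : p ∉ Set.Ioc (0:ℝ) Λ := fun h => absurd h.2 (not_le.2 hpΛ)
      rw [hF₁, hF₂, hF₃, Set.indicator_of_mem hpmem, Set.indicator_of_mem hpmem,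
        Set.indicator_of_notMem hnot]
      simp only [cutoffBesselD, momentumBesselD]
      rw [Set.indicator_of_notMem hnot]
      rw [hG]
      ring
  have hae : (fun p => cutoffBesselD α f ψ Λ p - momentumBesselD α ψ p)
      =ᵐ[μ] (fun p => F₁ p + (F₂ p + F₃ p)) := by
    rw [hμ]
    exact (ae_restrict_iff' measurableSet_Ioi).2 (ae_of_all _ hdecomp)
  rw [eLpNorm_congr_ae hae]
  -- measurability
  have hGc : Continuous G := hψ.cont_G
  have hF₁m : AEStronglyMeasurable F₁ μ :=
    ((continuous_const.mul Complex.continuous_ofReal).aestronglyMeasurable).indicator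
      measurableSet_Ioc
  have hF₂m : AEStronglyMeasurable F₂ μ :=
    (((Complex.continuous_ofReal.pow 2).aestronglyMeasurable.mul hψ.1).neg).indicator
      measurableSet_Ioi
  have hF₃m : AEStronglyMeasurable F₃ μ :=
    (((continuous_const.mul hGc).neg).aestronglyMeasurable).indicator measurableSet_Ioi
  -- piece 1 bound
  have hAnorm : ‖A‖ ≤ aa Λ := by
    have h1 : ‖∫ q in Set.Ioi Λ, ψ q‖ ≤ S 0 Λ := by
      refine (norm_integral_le_integral_norm _).trans (le_of_eq ?_)
      refine setIntegral_congr_fun measurableSet_Ioi fun q hq => ?_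
      simp
    have h2 : ‖∫ q in Set.Ioi Λ, (q:ℂ) * ψ q‖ ≤ S 1 Λ := by
      refine (norm_integral_le_integral_norm _).trans (le_of_eq ?_)
      refine setIntegral_congr_fun measurableSet_Ioi fun q hq => ?_
      rw [norm_mul, Complex.norm_real, Real.norm_eq_abs,
        abs_of_pos (lt_trans hΛpos hq), pow_one]
    have hffrac : ‖((f Λ / Λ : ℝ):ℂ)‖ ≤ C / Λ := by
      rw [Complex.norm_real, Real.norm_eq_abs, abs_div, abs_of_pos hΛpos]
      gcongr
    calc ‖A‖ ≤ ‖((α:ℂ) - 1/4) * ∫ q in Set.Ioi Λ, ψ q‖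
          + ‖((f Λ / Λ : ℝ):ℂ) * ∫ q in Set.Ioi Λ, (q:ℂ) * ψ q‖ := by
          rw [hA]
          exact (norm_sub_le _ _).trans (by rw [norm_neg])
      _ ≤ cα * S 0 Λ + (C/Λ) * S 1 Λ := by
          rw [norm_mul, norm_mul, hnormα]
          exact add_le_add (mul_le_mul_of_nonneg_left h1 hcαnn)
            (mul_le_mul hffrac h2 (norm_nonneg _) (by positivity))
      _ = aa Λ := rfl
  -- piece 1
  set g1 : ℝ → ℝ := Set.indicator (Set.Ioc 0 Λ) (fun p => ‖A‖ * p) with hg1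
  have hg1m : AEStronglyMeasurable g1 μ :=
    ((continuous_const.mul continuous_id).aestronglyMeasurable).indicator measurableSet_Ioc
  have hg1sq : Integrable (fun x => g1 x ^ 2) μ := by
    rw [hg1, sq_indicator_eq]
    exact indicator_integrable_restrict measurableSet_Ioc (fun x hx => hx.1)
      (Continuous.integrableOn_Ioc ((continuous_const.mul continuous_id).pow 2))
  have hg1b : ∀ᵐ x ∂μ, ‖F₁ x‖ ≤ g1 x := by
    refine ae_of_all _ fun x => ?_
    rw [hF₁, hg1]
    by_cases hx : x ∈ Set.Ioc (0:ℝ) Λ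
    · rw [Set.indicator_of_mem hx, Set.indicator_of_mem hx, norm_mul, Complex.norm_real,
        Real.norm_eq_abs, abs_of_pos hx.1]
    · rw [Set.indicator_of_notMem hx, Set.indicator_of_notMem hx, norm_zero]
  have hg1int : (∫ x, g1 x ^ 2 ∂μ) ≤ I1 Λ := by
    have he : (∫ x, g1 x ^ 2 ∂μ) = ∫ x in Set.Ioc (0:ℝ) Λ, (‖A‖ * x)^2 := by
      rw [hg1, sq_indicator_eq, hμ, indicator_integral_restrict measurableSet_Ioc
        (fun x hx => hx.1)]
    rw [he]
    have hmono : (∫ x in Set.Ioc (0:ℝ) Λ, (‖A‖ * x)^2) ≤ ∫ x in Set.Ioc (0:ℝ) Λ, (‖A‖ * Λ)^2 := by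
      refine setIntegral_mono_on (Continuous.integrableOn_Ioc ((continuous_const.mul continuous_id).pow 2))
        (integrableOn_const (by rw [Real.volume_Ioc]; exact ENNReal.ofReal_ne_top))
        measurableSet_Ioc fun x hx => ?_
      exact pow_le_pow_left₀ (mul_nonneg (norm_nonneg _) hx.1.le)
        (mul_le_mul_of_nonneg_left hx.2 (norm_nonneg _)) 2
    have hconst : (∫ x in Set.Ioc (0:ℝ) Λ, (‖A‖ * Λ)^2) = (‖A‖*Λ)^2 * Λ := by
      rw [setIntegral_const, measureReal_def, Real.volume_Ioc, smul_eq_mul,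
        ENNReal.toReal_ofReal (by linarith)]
      ring
    calc (∫ x in Set.Ioc (0:ℝ) Λ, (‖A‖ * x)^2) ≤ (‖A‖*Λ)^2 * Λ := hmono.trans_eq hconst
      _ ≤ (aa Λ * Λ)^2 * Λ := by
          refine mul_le_mul_of_nonneg_right
            (pow_le_pow_left₀ (mul_nonneg (norm_nonneg _) hΛpos.le)
              (mul_le_mul_of_nonneg_right hAnorm hΛpos.le) 2) hΛpos.le
      _ = I1 Λ := by rw [hI1]; ring
  have hP1 : eLpNorm F₁ 2 μ ≤ ENNReal.ofReal (I1 Λ ^ ((2:ℝ)⁻¹)) := by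
    refine (eLpNorm_two_le_sqrt hg1m hg1sq hg1b).trans ?_
    exact ENNReal.ofReal_le_ofReal
      (Real.rpow_le_rpow (integral_nonneg fun x => sq_nonneg _) hg1int (by norm_num))
  -- piece 2
  have hIoiSub : Set.Ioi Λ ⊆ Set.Ioi (0:ℝ) := Set.Ioi_subset_Ioi hΛpos.le
  set g2 : ℝ → ℝ := Set.indicator (Set.Ioi Λ) (fun p => p^2 * ‖ψ p‖) with hg2
  have hg2m : AEStronglyMeasurable g2 μ :=
    ((continuous_pow 2).aestronglyMeasurable.mul hψ.1.norm).indicator measurableSet_Ioi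
  have hg2sqOn : IntegrableOn (fun p : ℝ => (p^2*‖ψ p‖)^2) (Set.Ioi Λ) volume := by
    refine IntegrableOn.congr_fun ((hψ.2 4).mono_set hIoiSub) (fun x hx => ?_) measurableSet_Ioi
    ring
  have hg2sq : Integrable (fun x => g2 x ^ 2) μ := by
    rw [hg2, sq_indicator_eq]
    exact indicator_integrable_restrict measurableSet_Ioi hIoiSub hg2sqOn
  have hg2b : ∀ᵐ x ∂μ, ‖F₂ x‖ ≤ g2 x := by
    refine ae_of_all _ fun x => ?_
    rw [hF₂, hg2]
    by_cases hx : x ∈ Set.Ioi Λ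
    · rw [Set.indicator_of_mem hx, Set.indicator_of_mem hx, norm_neg, norm_mul, norm_pow,
        Complex.norm_real, Real.norm_eq_abs, abs_of_pos (hΛpos.trans hx)]
    · rw [Set.indicator_of_notMem hx, Set.indicator_of_notMem hx, norm_zero]
  have hg2int : (∫ x, g2 x ^ 2 ∂μ) = I2 Λ := by
    rw [hg2, sq_indicator_eq, hμ, indicator_integral_restrict measurableSet_Ioi hIoiSub, hI2]
    refine setIntegral_congr_fun measurableSet_Ioi fun x hx => ?_
    ring
  have hP2 : eLpNorm F₂ 2 μ ≤ ENNReal.ofReal (I2 Λ ^ ((2:ℝ)⁻¹)) := by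
    refine (eLpNorm_two_le_sqrt hg2m hg2sq hg2b).trans ?_
    rw [hg2int]
  -- piece 3
  set g3 : ℝ → ℝ := Set.indicator (Set.Ioi Λ) (fun p => c3 * (p⁻¹)^2) with hg3
  have hg3m : AEStronglyMeasurable g3 μ :=
    (((measurable_inv.pow_const 2).const_mul c3).aestronglyMeasurable).indicator
      measurableSet_Ioi
  have hrpow_eq : ∀ x ∈ Set.Ioi Λ, c3^2 * x^(-4:ℝ) = (c3 * (x⁻¹)^2)^2 := by
    intro x hx
    have hx0 : (0:ℝ) < x := hΛpos.trans hx
    rw [show (-4:ℝ) = -((4:ℕ):ℝ) by norm_num, Real.rpow_neg hx0.le, Real.rpow_natCast,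
      ← inv_pow]
    ring
  have hg3sqOn : IntegrableOn (fun p : ℝ => (c3 * (p⁻¹)^2)^2) (Set.Ioi Λ) volume := by
    have base : IntegrableOn (fun p : ℝ => c3^2 * p^(-4:ℝ)) (Set.Ioi Λ) volume :=
      (integrableOn_Ioi_rpow_of_lt (show (-4:ℝ) < -1 by norm_num) hΛpos).const_mul (c3^2)
    exact IntegrableOn.congr_fun base (fun x hx => hrpow_eq x hx) measurableSet_Ioi
  have hg3sq : Integrable (fun x => g3 x ^ 2) μ := by
    rw [hg3, sq_indicator_eq]
    exact indicator_integrable_restrict measurableSet_Ioi hIoiSub hg3sqOn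
  have hg3b : ∀ᵐ x ∂μ, ‖F₃ x‖ ≤ g3 x := by
    refine ae_of_all _ fun x => ?_
    rw [hF₃, hg3]
    by_cases hx : x ∈ Set.Ioi Λ
    · rw [Set.indicator_of_mem hx, Set.indicator_of_mem hx, norm_neg, norm_mul, hnormα]
      have hx0 : (0:ℝ) < x := hΛpos.trans hx
      have hGb := hψ.G_bound hmom hx0
      calc cα * ‖G x‖ ≤ cα * (2 * K3 * (x⁻¹)^2) := by
            refine mul_le_mul_of_nonneg_left ?_ hcαnn
            rw [hK3]
            exact hGb
        _ = c3 * (x⁻¹)^2 := by rw [hc3]; ring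
    · rw [Set.indicator_of_notMem hx, Set.indicator_of_notMem hx, norm_zero]
  have hg3int : (∫ x, g3 x ^ 2 ∂μ) = I3 Λ := by
    rw [hg3, sq_indicator_eq, hμ, indicator_integral_restrict measurableSet_Ioi hIoiSub]
    have he : ∫ x in Set.Ioi Λ, (c3*(x⁻¹)^2)^2 = ∫ x in Set.Ioi Λ, c3^2 * x^(-4:ℝ) :=
      setIntegral_congr_fun measurableSet_Ioi fun x hx => (hrpow_eq x hx).symm
    rw [he, integral_const_mul, integral_Ioi_rpow_of_lt (show (-4:ℝ) < -1 by norm_num) hΛpos,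
      hI3, show (-4:ℝ) + 1 = -3 by norm_num]
    ring
  have hP3 : eLpNorm F₃ 2 μ ≤ ENNReal.ofReal (I3 Λ ^ ((2:ℝ)⁻¹)) := by
    refine (eLpNorm_two_le_sqrt hg3m hg3sq hg3b).trans ?_
    rw [hg3int]
  -- combine
  calc eLpNorm (fun p => F₁ p + (F₂ p + F₃ p)) 2 μ
      ≤ eLpNorm F₁ 2 μ + eLpNorm (fun p => F₂ p + F₃ p) 2 μ :=
        eLpNorm_add_le hF₁m (hF₂m.add hF₃m) one_le_two
    _ ≤ eLpNorm F₁ 2 μ + (eLpNorm F₂ 2 μ + eLpNorm F₃ 2 μ) :=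
        add_le_add le_rfl (eLpNorm_add_le hF₂m hF₃m one_le_two)
    _ ≤ ENNReal.ofReal (I1 Λ ^ ((2:ℝ)⁻¹)) + (ENNReal.ofReal (I2 Λ ^ ((2:ℝ)⁻¹))
        + ENNReal.ofReal (I3 Λ ^ ((2:ℝ)⁻¹))) := add_le_add hP1 (add_le_add hP2 hP3)
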